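/- Fix n ≥ 1, k ≥ 2, and 1 ≤ i ≤ k−1. For every permutation σ of [n−i] avoiding 12…k, 132, and 213, the permutation n−i+1, n−i+2, …, n, σ (with σ appended after the increasing run of the i largest values) is a permutation of [n] avoiding 12…k, 132, and 213. -/

import Mathlib

/-- A permutation `π` of `Fin n` avoids the pattern given (in one-line notation) by the
list `s` when there is no increasing choice of positions along which the values of `π`
have the same pairwise comparisons as the entries of `s`. -/
def AvoidsPat {n : ℕ} (π : Equiv.Perm (Fin n)) (s : List ℕ) : Prop :=
  ¬ ∃ f : Fin s.length ↪o Fin n,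
      ∀ i j : Fin s.length, s.get i < s.get j ↔ π (f i) < π (f j)

/-- The number of permutations of `Fin n` avoiding every pattern in `R`. -/
noncomputable def AvoidCount (R : List (List ℕ)) (n : ℕ) : ℕ :=
  Nat.card {π : Equiv.Perm (Fin n) // ∀ s ∈ R, AvoidsPat π s}

/-- The `k`-generalized Fibonacci numbers: `F_{k,n} = 0` for `n ≤ 0`, `F_{k,1} = 1`,
`F_{k,n} = ∑_{i=1}^{k} F_{k,n-i}` for `n ≥ 2` (terms with nonpositive index are `0`). -/
def genFib (k : ℕ) : ℕ → ℕ
  | 0 => 0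
  | 1 => 1
  | n + 2 => ∑ i ∈ Finset.range k, genFib k (n + 1 - i)

theorem prepend_run_avoids_12k_132_213 (n k i : ℕ) (hn : 1 ≤ n) (hk : 2 ≤ k)
    (hi1 : 1 ≤ i) (hik : i ≤ k - 1)
    (σ : Equiv.Perm (Fin (n - i)))
    (hσ1 : AvoidsPat σ ((List.range k).map (· + 1)))
    (hσ2 : AvoidsPat σ [1, 3, 2]) (hσ3 : AvoidsPat σ [2, 1, 3])
    (π : Equiv.Perm (Fin n))
    (hπ1 : ∀ j : Fin n, (j : ℕ) < i → (π j : ℕ) = n - i + (j : ℕ))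
    (hπ2 : ∀ j : Fin n, i ≤ (j : ℕ) → ∀ hh : (j : ℕ) - i < n - i,
      (π j : ℕ) = (σ ⟨(j : ℕ) - i, hh⟩ : ℕ)) :
    AvoidsPat π ((List.range k).map (· + 1)) ∧ AvoidsPat π [1, 3, 2] ∧
      AvoidsPat π [2, 1, 3] := by
  -- values at positions in the second block are < n - i
  have hAle : ∀ j : Fin n, i ≤ (j : ℕ) → (π j : ℕ) < n - i := by
    intro j hj
    have hh : (j : ℕ) - i < n - i := by have := j.isLt; omega
    rw [hπ2 j hj hh]
    exact (σ ⟨_, hh⟩).isLt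
  -- values at positions in the first block are ≥ n - i
  have hBge : ∀ j : Fin n, (j : ℕ) < i → n - i ≤ (π j : ℕ) := by
    intro j hj; rw [hπ1 j hj]; omega
  -- transfer: an occurrence of a pattern entirely in the second block gives one in σ
  have transfer : ∀ (s : List ℕ) (f : Fin s.length ↪o Fin n),
      (∀ a b, s.get a < s.get b ↔ π (f a) < π (f b)) →
      (∀ j, i ≤ ((f j : Fin n) : ℕ)) →
      ∃ g : Fin s.length ↪o Fin (n - i),
        ∀ a b, s.get a < s.get b ↔ σ (g a) < σ (g b) := by
    intro s f hf hall
    have hlt : ∀ j : Fin s.length, ((f j : Fin n) : ℕ) - i < n - i := by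
      intro j; have := (f j).isLt; have := hall j; omega
    refine ⟨OrderEmbedding.ofStrictMono (fun j => ⟨((f j : Fin n) : ℕ) - i, hlt j⟩) ?_, ?_⟩
    · intro a b hab
      have h1 : ((f a : Fin n) : ℕ) < ((f b : Fin n) : ℕ) := f.strictMono hab
      have := hall a
      exact Fin.mk_lt_mk.mpr (by omega)
    · intro a b
      have ea : (π (f a) : ℕ) = (σ ⟨((f a : Fin n) : ℕ) - i, hlt a⟩ : ℕ) :=
        hπ2 _ (hall a) _
      have eb : (π (f b) : ℕ) = (σ ⟨((f b : Fin n) : ℕ) - i, hlt b⟩ : ℕ) :=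
        hπ2 _ (hall b) _
      rw [hf a b]
      show π (f a) < π (f b) ↔ σ ⟨((f a : Fin n) : ℕ) - i, hlt a⟩ < σ ⟨((f b : Fin n) : ℕ) - i, hlt b⟩
      constructor
      · intro h
        have : (π (f a) : ℕ) < (π (f b) : ℕ) := h
        exact Fin.lt_def.mpr (by omega)
      · intro h
        have : (σ ⟨((f a : Fin n) : ℕ) - i, hlt a⟩ : ℕ) <
            (σ ⟨((f b : Fin n) : ℕ) - i, hlt b⟩ : ℕ) := h
        exact Fin.lt_def.mpr (by omega)
  refine ⟨?_, ?_, ?_⟩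
  · -- avoids 1 2 ... k
    rintro ⟨f, hf⟩
    have hlen : ((List.range k).map (· + 1)).length = k := by simp
    have hsget : ∀ idx : Fin ((List.range k).map (· + 1)).length,
        ((List.range k).map (· + 1)).get idx = (idx : ℕ) + 1 := by
      intro idx
      simp [List.get_eq_getElem]
    -- some position lies in the second block, by pigeonhole
    have hex : ∃ j0, i ≤ ((f j0 : Fin n) : ℕ) := by
      by_contra hcon
      push_neg at hcon
      have e : Fin ((List.range k).map (· + 1)).length ↪ Fin i :=
        ⟨fun j => ⟨((f j : Fin n) : ℕ), hcon j⟩, by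
          intro a b hab
          simp only [Fin.mk.injEq] at hab
          exact f.injective (Fin.val_injective hab)⟩
      have := Fintype.card_le_of_embedding e
      simp [hlen] at this
      omega
    obtain ⟨j0, hj0⟩ := hex
    have hπj0 : (π (f j0) : ℕ) < n - i := hAle _ hj0
    have hall : ∀ j, i ≤ ((f j : Fin n) : ℕ) := by
      intro j
      rcases lt_trichotomy j j0 with h | h | h
      · have hlt : π (f j) < π (f j0) := by
          rw [← hf j j0, hsget j, hsget j0]
          have : (j : ℕ) < (j0 : ℕ) := h
          omega
        by_contra hcon
        push_neg at hcon
        have := hBge (f j) hcon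
        have : (π (f j) : ℕ) < (π (f j0) : ℕ) := hlt
        omega
      · subst h; exact hj0
      · have h2 : f j0 < f j := f.strictMono h
        have : ((f j0 : Fin n) : ℕ) < ((f j : Fin n) : ℕ) := h2
        omega
    obtain ⟨g, hg⟩ := transfer _ f hf hall
    exact hσ1 ⟨g, hg⟩
  · -- avoids 132
    rintro ⟨f, hf⟩
    set i0 : Fin ([1, 3, 2] : List ℕ).length := ⟨0, by simp⟩ with hi0
    set i1 : Fin ([1, 3, 2] : List ℕ).length := ⟨1, by simp⟩ with hi1'
    set i2 : Fin ([1, 3, 2] : List ℕ).length := ⟨2, by simp⟩ with hi2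
    have h01 : π (f i0) < π (f i1) := (hf i0 i1).mp (by norm_num [hi0, hi1'])
    have h02 : π (f i0) < π (f i2) := (hf i0 i2).mp (by norm_num [hi0, hi2])
    have h21 : π (f i2) < π (f i1) := (hf i2 i1).mp (by norm_num [hi2, hi1'])
    have hall : ∀ j, i ≤ ((f j : Fin n) : ℕ) := by
      -- first: i ≤ f i0
      have h0 : i ≤ ((f i0 : Fin n) : ℕ) := by
        by_contra hcon
        push_neg at hcon
        have hb0 := hBge (f i0) hcon
        -- f i2 is in the first block since π (f i2) > π (f i0) ≥ n - i
        have hc2 : ((f i2 : Fin n) : ℕ) < i := by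
          by_contra hcon2
          push_neg at hcon2
          have := hAle (f i2) hcon2
          have : (π (f i0) : ℕ) < (π (f i2) : ℕ) := h02
          omega
        have hc1 : ((f i1 : Fin n) : ℕ) < i := by
          have h12 : f i1 < f i2 := f.strictMono (by simp [hi1', hi2, Fin.lt_def])
          have : ((f i1 : Fin n) : ℕ) < ((f i2 : Fin n) : ℕ) := h12
          omega
        -- both in first block, positions increasing, so values increasing: contradiction
        have e1 := hπ1 (f i1) hc1
        have e2 := hπ1 (f i2) hc2
        have h12 : f i1 < f i2 := f.strictMono (by simp [hi1', hi2, Fin.lt_def])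
        have h12' : ((f i1 : Fin n) : ℕ) < ((f i2 : Fin n) : ℕ) := h12
        have : (π (f i2) : ℕ) < (π (f i1) : ℕ) := h21
        omega
      intro j
      have : f i0 ≤ f j := f.monotone (by
        simp only [hi0]
        exact Fin.mk_le_mk.mpr (Nat.zero_le _))
      have : ((f i0 : Fin n) : ℕ) ≤ ((f j : Fin n) : ℕ) := this
      omega
    obtain ⟨g, hg⟩ := transfer _ f hf hall
    exact hσ2 ⟨g, hg⟩
  · -- avoids 213
    rintro ⟨f, hf⟩
    set i0 : Fin ([2, 1, 3] : List ℕ).length := ⟨0, by simp⟩ with hi0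
    set i1 : Fin ([2, 1, 3] : List ℕ).length := ⟨1, by simp⟩ with hi1'
    set i2 : Fin ([2, 1, 3] : List ℕ).length := ⟨2, by simp⟩ with hi2
    have h10 : π (f i1) < π (f i0) := (hf i1 i0).mp (by norm_num [hi0, hi1'])
    have h02 : π (f i0) < π (f i2) := (hf i0 i2).mp (by norm_num [hi0, hi2])
    have hall : ∀ j, i ≤ ((f j : Fin n) : ℕ) := by
      have h0 : i ≤ ((f i0 : Fin n) : ℕ) := by
        by_contra hcon
        push_neg at hcon
        have hb0 := hBge (f i0) hcon
        have hc2 : ((f i2 : Fin n) : ℕ) < i := by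
          by_contra hcon2
          push_neg at hcon2
          have := hAle (f i2) hcon2
          have : (π (f i0) : ℕ) < (π (f i2) : ℕ) := h02
          omega
        have hc1 : ((f i1 : Fin n) : ℕ) < i := by
          have h12 : f i1 < f i2 := f.strictMono (by simp [hi1', hi2, Fin.lt_def])
          have : ((f i1 : Fin n) : ℕ) < ((f i2 : Fin n) : ℕ) := h12
          omega
        -- f i0 < f i1 both in first block, so π (f i0) < π (f i1), contradicting h10
        have e0 := hπ1 (f i0) hcon
        have e1 := hπ1 (f i1) hc1
        have h01 : f i0 < f i1 := f.strictMono (by simp [hi0, hi1', Fin.lt_def])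
        have h01' : ((f i0 : Fin n) : ℕ) < ((f i1 : Fin n) : ℕ) := h01
        have : (π (f i1) : ℕ) < (π (f i0) : ℕ) := h10
        omega
      intro j
      have : f i0 ≤ f j := f.monotone (by
        simp only [hi0]
        exact Fin.mk_le_mk.mpr (Nat.zero_le _))
      have : ((f i0 : Fin n) : ℕ) ≤ ((f j : Fin n) : ℕ) := this
      omega
    obtain ⟨g, hg⟩ := transfer _ f hf hall
    exact hσ3 ⟨g, hg⟩
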